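/- Let A and B be fields contained in a common algebraically closed field Ω, and assume the field composite AB is a regular extension of A and of B. If E = A ∩ B, then the separable closure of E equals the intersection of the separable closures of A and B, i.e., E^s = A^s ∩ B^s. -/

import Mathlib

namespace PacPaper
variable {Ω : Type} [Field Ω] [IsAlgClosed Ω]

/-- The separable closure of a subfield `K` inside `Ω`. -/
noncomputable def sepCl (K : Subfield Ω) : Subfield Ω := (separableClosure K Ω).toSubfield

/-- The (relative) algebraic closure of a subfield `K` inside `Ω`. -/
noncomputable def algCl (K : Subfield Ω) : Subfield Ω := (algebraicClosure K Ω).toSubfield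

/-- The perfect (purely inseparable) closure of a subfield `K` inside `Ω`. -/
noncomputable def pCl (K : Subfield Ω) : Subfield Ω := (perfectClosure K Ω).toSubfield

/-- `A` and `B` are linearly disjoint over a common subfield `E`:
every finite subset of `A` which is linearly independent over `E` remains
linearly independent over `B`. -/
def LinDisj (E A B : Subfield Ω) : Prop :=
  ∀ s : Finset Ω, ↑s ⊆ (A : Set Ω) →
    LinearIndependent E (Subtype.val : {x : Ω // x ∈ s} → Ω) →
    LinearIndependent B (Subtype.val : {x : Ω // x ∈ s} → Ω)

/-- `A` and `B` are free over `E`: every finite subset of `A` which is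
algebraically independent over `E` remains algebraically independent over `B`. -/
def FreeOver (E A B : Subfield Ω) : Prop :=
  ∀ s : Finset Ω, ↑s ⊆ (A : Set Ω) →
    AlgebraicIndependent E (Subtype.val : {x : Ω // x ∈ s} → Ω) →
    AlgebraicIndependent B (Subtype.val : {x : Ω // x ∈ s} → Ω)

/-- `L` is a regular extension of `K`: `K ≤ L` and `L` is linearly disjoint
over `K` from the algebraic closure of `K`. -/
def IsRegularExt (K L : Subfield Ω) : Prop := K ≤ L ∧ LinDisj K L (algCl K)

/-- `L` is a separable extension of `K`: `K ≤ L` and `L` is linearly disjoint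
over `K` from the perfect closure of `K`. -/
def IsSepExt (K L : Subfield Ω) : Prop := K ≤ L ∧ LinDisj K L (pCl K)

/-- `K` is separably closed (in `Ω`). -/
def IsSepClosedIn (K : Subfield Ω) : Prop := sepCl K = K

/-- The Galois group `Gal(X/Y)`: ring automorphisms of `X` fixing the
elements of `X` lying in `Y`. -/
def galGrp (Y X : Subfield Ω) : Subgroup (X ≃+* X) where
  carrier := {f | ∀ x : X, (x : Ω) ∈ Y → f x = x}
  one_mem' := by intro x _; rfl
  mul_mem' := by
    intro f g hf hg x hx
    show f (g x) = x
    rw [hg x hx, hf x hx]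
  inv_mem' := by
    intro f hf x hx
    show f.symm x = x
    conv_lhs => rw [← hf x hx]
    exact f.symm_apply_apply x

/-- `f` (an automorphism of `S`) and `g` (an automorphism of `T`) agree on the
elements of the subfield `U`. -/
def Agree {S T : Subfield Ω} (f : S ≃+* S) (g : T ≃+* T) (U : Subfield Ω) : Prop :=
  ∀ (x : Ω) (h₁ : x ∈ S) (h₂ : x ∈ T), x ∈ U →
    ((f ⟨x, h₁⟩ : Ω) = (g ⟨x, h₂⟩ : Ω))

/-- `σ` (an automorphism of the larger field `X`) restricts to `τ` on the
subfield `S`. -/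
def RestrictsTo {X S : Subfield Ω} (σ : X ≃+* X) (τ : S ≃+* S) : Prop :=
  Agree σ τ S

end PacPaper

set_option linter.unusedSectionVars false

namespace PacPaper
variable {Ω : Type} [Field Ω] [IsAlgClosed Ω]

theorem lindisj_swap {E L M : Subfield Ω} (hEM : E ≤ M)
    (h : LinDisj E L M) {ι : Type} [Fintype ι] {v : ι → Ω} (hv : ∀ i, v i ∈ M)
    (hli : LinearIndependent E v) : LinearIndependent L v := by
  rw [Fintype.linearIndependent_iff] at hli ⊢
  intro g hg
  obtain ⟨b, hbt, hspan, hbli⟩ :=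
    exists_linearIndependent (↥E) (Set.range fun i => (g i : Ω))
  have hbfin : b.Finite := (Set.finite_range _).subset hbt
  set T : Finset Ω := hbfin.toFinset with hT
  have hbL : ↑T ⊆ (L : Set Ω) := by
    rw [hT, Set.Finite.coe_toFinset]
    exact hbt.trans (by rintro _ ⟨i, rfl⟩; exact (g i).2)
  have hMli : LinearIndependent M (Subtype.val : {x : Ω // x ∈ T} → Ω) := by
    apply h T hbL
    have heq : (Subtype.val : {x : Ω // x ∈ T} → Ω) =
        (Subtype.val : b → Ω) ∘ (Equiv.subtypeEquivRight (fun x => by simp [hT])) := by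
      funext j; rfl
    rw [heq]
    exact hbli.comp _ (Equiv.injective _)
  have hrep : ∀ i, ∃ c : Ω →₀ E, (c.support : Set Ω) ⊆ b ∧
      (c.sum fun a r => r • a) = (g i : Ω) := by
    intro i
    have : (g i : Ω) ∈ Submodule.span E b := by
      rw [hspan]; exact Submodule.subset_span ⟨i, rfl⟩
    exact Submodule.mem_span_set.mp this
  choose c hcsupp hcsum using hrep
  have hgsum : ∀ i, (g i : Ω) = ∑ a ∈ T, (c i a : Ω) * a := by
    intro i
    have hsub : (c i).support ⊆ T := fun a ha => hbfin.mem_toFinset.mpr (hcsupp i ha)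
    rw [← hcsum i, Finsupp.sum_of_support_subset (c i) hsub _ (by intros; simp)]
    rfl
  have key : ∑ j : {x : Ω // x ∈ T}, (∑ i, (c i (j : Ω) : Ω) * v i) * (j : Ω) = 0 := by
    calc ∑ j : {x : Ω // x ∈ T}, (∑ i, (c i (j : Ω) : Ω) * v i) * (j : Ω)
        = ∑ a ∈ T, (∑ i, (c i a : Ω) * v i) * a :=
          Finset.sum_coe_sort T (fun a => (∑ i, (c i a : Ω) * v i) * a)
      _ = ∑ a ∈ T, ∑ i, ((c i a : Ω) * a) * v i := by
          refine Finset.sum_congr rfl fun a _ => ?_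
          rw [Finset.sum_mul]
          exact Finset.sum_congr rfl fun i _ => by ring
      _ = ∑ i, ∑ a ∈ T, ((c i a : Ω) * a) * v i := Finset.sum_comm
      _ = ∑ i, (g i : Ω) * v i := by
          refine Finset.sum_congr rfl fun i _ => ?_
          rw [← Finset.sum_mul, ← hgsum i]
      _ = 0 := hg
  have hzero : ∀ a ∈ T, ∑ i, (c i a : Ω) * v i = 0 := by
    intro a ha
    have hG := Fintype.linearIndependent_iff.mp hMli
      (fun j => (⟨∑ i, (c i (j : Ω) : Ω) * v i,
        Subfield.sum_mem M fun i _ => mul_mem (hEM (c i (j : Ω)).2) (hv i)⟩ : M))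
      key ⟨a, ha⟩
    simpa using congrArg Subtype.val hG
  intro i
  have hc0 : ∀ a ∈ T, c i a = 0 := by
    intro a ha
    have hs : ∑ j, (fun j => c j a) j • v j = 0 := hzero a ha
    exact hli (fun j => c j a) hs i
  have : (g i : Ω) = 0 := by
    rw [hgsum i]
    exact Finset.sum_eq_zero fun a ha => by rw [hc0 a ha]; simp
  exact Subtype.ext this

theorem mem_sepCl_iff {K : Subfield Ω} {x : Ω} : x ∈ sepCl K ↔ IsSeparable K x := by
  rw [sepCl, IntermediateField.mem_toSubfield, mem_separableClosure_iff]

theorem isSep_mono {K L : Subfield Ω} (h : K ≤ L) (x : Ω) (hx : IsSeparable K x) :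
    IsSeparable L x := by
  have hcomp : (algebraMap L Ω).comp (Subfield.inclusion h) = algebraMap K Ω := by ext a; rfl
  have h0 : Polynomial.aeval x ((minpoly K x).map (Subfield.inclusion h)) = 0 := by
    rw [Polynomial.aeval_def, Polynomial.eval₂_map, hcomp, ← Polynomial.aeval_def, minpoly.aeval]
  exact ((Polynomial.separable_map (Subfield.inclusion h)).mpr hx).of_dvd (minpoly.dvd L x h0)

theorem minpoly_map_eq {K L : Subfield Ω} (hKL : K ≤ L) (hdisj : LinDisj K L (algCl K))
    (x : Ω) (hx : IsIntegral K x) :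
    (minpoly L x).map (algebraMap L Ω) = (minpoly K x).map (algebraMap K Ω) := by
  have hcomp : (algebraMap L Ω).comp (Subfield.inclusion hKL) = algebraMap K Ω := by
    ext a; rfl
  set p := minpoly K x with hp
  set n := p.natDegree with hn
  have hKalg : K ≤ algCl K := by
    intro a ha
    rw [algCl, IntermediateField.mem_toSubfield]
    exact (algebraicClosure K Ω).algebraMap_mem ⟨a, ha⟩
  have hxM : x ∈ algCl K := by
    rw [algCl, IntermediateField.mem_toSubfield, mem_algebraicClosure_iff]
    exact hx.isAlgebraic
  have hpow : ∀ i : Fin n, x ^ (i : ℕ) ∈ algCl K := fun i => pow_mem hxM _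
  have hliK : LinearIndependent K fun i : Fin n => x ^ (i : ℕ) := linearIndependent_pow x
  have hliL : LinearIndependent L fun i : Fin n => x ^ (i : ℕ) :=
    lindisj_swap hKalg hdisj hpow hliK
  set P' : Polynomial L := p.map (Subfield.inclusion hKL) with hP'
  have hP'monic : P'.Monic := (minpoly.monic hx).map _
  have haevalP' : Polynomial.aeval x P' = 0 := by
    rw [hP', Polynomial.aeval_def, Polynomial.eval₂_map, hcomp, ← Polynomial.aeval_def,
      minpoly.aeval]
  have hxL : IsIntegral L x := ⟨P', hP'monic, by rwa [Polynomial.aeval_def] at haevalP'⟩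
  set q := minpoly L x with hq
  have hdvd : q ∣ P' := minpoly.dvd L x haevalP'
  have hdegP' : P'.natDegree = n := (minpoly.monic hx).natDegree_map _
  have hdegge : n ≤ q.natDegree := by
    by_contra hlt
    push_neg at hlt
    have hsum0 : ∑ i ∈ Finset.range n, q.coeff i • x ^ i = 0 := by
      rw [← Polynomial.aeval_eq_sum_range' hlt, minpoly.aeval]
    have hsum : ∑ i : Fin n, (fun i : Fin n => q.coeff (i : ℕ)) i • x ^ (i : ℕ) = 0 := by
      rw [Fin.sum_univ_eq_sum_range (fun i => q.coeff i • x ^ i) n]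
      exact hsum0
    have h1 := Fintype.linearIndependent_iff.mp hliL _ hsum ⟨q.natDegree, hlt⟩
    have hmq : q.Monic := minpoly.monic hxL
    simp only [Polynomial.Monic, Polynomial.leadingCoeff] at hmq
    rw [hmq] at h1
    exact one_ne_zero h1
  have heq : P' = q := by
    refine Polynomial.eq_of_monic_of_dvd_of_natDegree_le (minpoly.monic hxL) hP'monic hdvd ?_
    rw [hdegP']
    exact hdegge
  rw [← heq, hP', Polynomial.map_map, hcomp]

end PacPaper


open PacPaper in
/-- Let `A`, `B` be subfields of an algebraically closed field `Ω`, and assume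
the composite `AB` is a regular extension of `A` and of `B`.  If `E = A ∩ B`,
then `E^s = A^s ∩ B^s`. -/
theorem sepClosure_inf_eq_inf_sepClosures
    (Ω : Type) [Field Ω] [IsAlgClosed Ω] (A B : Subfield Ω)
    (hA : IsRegularExt A (A ⊔ B)) (hB : IsRegularExt B (A ⊔ B)) :
    sepCl (A ⊓ B) = sepCl A ⊓ sepCl B := by
  apply le_antisymm
  · exact le_inf
      (fun x hx => mem_sepCl_iff.mpr (isSep_mono inf_le_left x (mem_sepCl_iff.mp hx)))
      (fun x hx => mem_sepCl_iff.mpr (isSep_mono inf_le_right x (mem_sepCl_iff.mp hx)))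
  · intro x hx
    rw [Subfield.mem_inf] at hx
    have hsA : IsSeparable A x := mem_sepCl_iff.mp hx.1
    have hsB : IsSeparable B x := mem_sepCl_iff.mp hx.2
    have hPA := minpoly_map_eq le_sup_left hA.2 x hsA.isIntegral
    have hPB := minpoly_map_eq le_sup_right hB.2 x hsB.isIntegral
    set P : Polynomial Ω := (minpoly ↥(A ⊔ B) x).map (algebraMap ↥(A ⊔ B) Ω) with hP
    have hcoeff : ∀ i, P.coeff i ∈ A ⊓ B := by
      intro i
      rw [Subfield.mem_inf]
      constructor
      · rw [hPA, Polynomial.coeff_map]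
        exact ((minpoly A x).coeff i).2
      · rw [hPB, Polynomial.coeff_map]
        exact ((minpoly B x).coeff i).2
    set r : Polynomial ↥(A ⊓ B) := ∑ i ∈ Finset.range (P.natDegree + 1),
      Polynomial.C (⟨P.coeff i, hcoeff i⟩ : ↥(A ⊓ B)) * Polynomial.X ^ i with hr
    have hrmap : r.map (algebraMap ↥(A ⊓ B) Ω) = P := by
      rw [hr, Polynomial.map_sum]
      conv_rhs => rw [P.as_sum_range_C_mul_X_pow]
      refine Finset.sum_congr rfl fun i _ => ?_
      rw [Polynomial.map_mul, Polynomial.map_pow, Polynomial.map_C, Polynomial.map_X]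
      rfl
    have haeval_r : Polynomial.aeval x r = 0 := by
      rw [Polynomial.aeval_def, ← Polynomial.eval_map, hrmap, hP, Polynomial.eval_map,
        ← Polynomial.aeval_def, minpoly.aeval]
    have hdvd : (minpoly ↥(A ⊓ B) x).map (algebraMap ↥(A ⊓ B) Ω) ∣ P := by
      rw [← hrmap]
      exact Polynomial.map_dvd _ (minpoly.dvd _ x haeval_r)
    have hPsep : P.Separable := by
      rw [hPA]
      exact Polynomial.Separable.map (f := algebraMap A Ω) hsA
    have hms : ((minpoly ↥(A ⊓ B) x).map (algebraMap ↥(A ⊓ B) Ω)).Separable := hPsep.of_dvd hdvd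
    exact mem_sepCl_iff.mpr ((Polynomial.separable_map _).mp hms)
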